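/- Let p be a prime, let 1 ≤ m < n, let M be an m × n matrix over ℤ/pℤ of rank m, let V = ker M (so V is a subspace of (ℤ/pℤ)^n of codimension m), and let A ⊆ (ℤ/pℤ)^m be the set of columns of M. Then h^c(A) ≤ h_p(V); moreover, if h^c(A) < p, then h^c(A) = h_p(V). -/

import Mathlib

open scoped Pointwise

/-- Nathanson height of a subspace `V ⊆ (ℤ/pℤ)^n`. -/
noncomputable def nheight {p n : ℕ} (V : Submodule (ZMod p) (Fin n → ZMod p)) : ℕ :=
  sInf {k : ℕ | ∃ v ∈ V, v ≠ 0 ∧ k = ∑ i, (v i).val}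

/-- `iterSum A k` is the `k`-fold sumset `A + ⋯ + A` (with `iterSum A 0 = {0}`). -/
def iterSum {G : Type*} [AddCommMonoid G] (A : Set G) : ℕ → Set G
  | 0 => {0}
  | k + 1 => iterSum A k + A

/-- The coheight of `A`: the least positive `k` with `0 ∈ A + ⋯ + A` (`k` copies). -/
noncomputable def coheight {G : Type*} [AddCommMonoid G] (A : Set G) : ℕ :=
  sInf {k : ℕ | 0 < k ∧ (0 : G) ∈ iterSum A k}

lemma mem_iterSum_add {G : Type*} [AddCommMonoid G] (A : Set G) {k l : ℕ} {x y : G}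
    (hx : x ∈ iterSum A k) (hy : y ∈ iterSum A l) : x + y ∈ iterSum A (k + l) := by
  induction l generalizing y with
  | zero =>
    simp only [iterSum, Set.mem_singleton_iff] at hy
    simpa [hy] using hx
  | succ l ih =>
    obtain ⟨a, ha, b, hb, rfl⟩ := hy
    show x + (a + b) ∈ iterSum A (k + l) + A
    rw [← add_assoc]
    exact Set.add_mem_add (ih ha) hb

lemma nsmul_mem_iterSum {G : Type*} [AddCommMonoid G] (A : Set G) {a : G} (ha : a ∈ A) (c : ℕ) :
    c • a ∈ iterSum A c := by
  induction c with
  | zero => simp [iterSum]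
  | succ c ih =>
    rw [succ_nsmul]
    exact ⟨_, ih, a, ha, rfl⟩

lemma sum_nsmul_mem_iterSum {G : Type*} [AddCommMonoid G] (A : Set G) {ι : Type*} (s : Finset ι)
    (c : ι → ℕ) (a : ι → G) (ha : ∀ j ∈ s, a j ∈ A) :
    (∑ j ∈ s, c j • a j) ∈ iterSum A (∑ j ∈ s, c j) := by
  classical
  induction s using Finset.induction with
  | empty => simp [iterSum]
  | @insert j s hj ih =>
    rw [Finset.sum_insert hj, Finset.sum_insert hj]
    exact mem_iterSum_add A (nsmul_mem_iterSum A (ha _ (Finset.mem_insert_self _ _)) _)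
      (ih fun i his => ha i (Finset.mem_insert_of_mem his))

lemma exists_multiset_of_mem_iterSum {G : Type*} [AddCommMonoid G] (A : Set G) {k : ℕ} {x : G}
    (hx : x ∈ iterSum A k) :
    ∃ s : Multiset G, Multiset.card s = k ∧ (∀ a ∈ s, a ∈ A) ∧ s.sum = x := by
  induction k generalizing x with
  | zero =>
    simp only [iterSum, Set.mem_singleton_iff] at hx
    exact ⟨0, by simp, by simp, by simp [hx]⟩
  | succ k ih =>
    obtain ⟨y, hy, b, hb, rfl⟩ := hx
    obtain ⟨s, hc, hs, hsum⟩ := ih hy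
    refine ⟨b ::ₘ s, by simp [hc], ?_, by simp [hsum, add_comm]⟩
    intro a ha
    rcases Multiset.mem_cons.1 ha with rfl | h
    · exact hb
    · exact hs _ h

theorem coheight_le_height_of_kernel (p m n : ℕ) (hp : p.Prime) (h1 : 1 ≤ m) (h2 : m < n)
    (M : Matrix (Fin m) (Fin n) (ZMod p)) (hM : M.rank = m)
    (V : Submodule (ZMod p) (Fin n → ZMod p)) (hV : V = LinearMap.ker M.mulVecLin)
    (A : Set (Fin m → ZMod p)) (hA : A = {c | ∃ j : Fin n, c = fun i => M i j}) :
    coheight A ≤ nheight V ∧ (coheight A < p → coheight A = nheight V) := by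
  haveI : Fact p.Prime := ⟨hp⟩
  classical
  set col : Fin n → (Fin m → ZMod p) := fun j i => M i j with hcoldef
  have hcolA : ∀ j, col j ∈ A := fun j => by rw [hA]; exact ⟨j, rfl⟩
  -- Part A: every nonzero kernel vector gives a membership for coheight
  have key1 : ∀ v : Fin n → ZMod p, v ∈ V → v ≠ 0 →
      0 < (∑ i, (v i).val) ∧ (0 : Fin m → ZMod p) ∈ iterSum A (∑ i, (v i).val) := by
    intro v hvV hv0
    have hker : M.mulVec v = 0 := by
      have h' := hV ▸ hvV
      simpa [LinearMap.mem_ker] using h'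
    constructor
    · obtain ⟨j, hj⟩ : ∃ j, v j ≠ 0 := by
        by_contra h; push_neg at h; exact hv0 (funext h)
      have hjpos : 0 < (v j).val := by
        rcases Nat.eq_zero_or_pos (v j).val with h0 | h0
        · exact absurd (by rwa [ZMod.val_eq_zero] at h0) hj
        · exact h0
      exact Finset.sum_pos' (fun i _ => Nat.zero_le _) ⟨j, Finset.mem_univ j, hjpos⟩
    · have hsum : (∑ j, (v j).val • col j) = 0 := by
        funext i
        simp only [Finset.sum_apply, Pi.zero_apply, Pi.smul_apply, hcoldef]
        have h4 : ∀ j, (v j).val • M i j = M i j * v j := fun j => by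
          rw [nsmul_eq_mul, ZMod.natCast_val, ZMod.cast_id]; exact mul_comm _ _
        rw [Finset.sum_congr rfl fun j _ => h4 j]
        exact congrFun hker i
      have hmem := sum_nsmul_mem_iterSum A Finset.univ (fun j => (v j).val) col
        (fun j _ => hcolA j)
      rwa [hsum] at hmem
  -- kernel is nonzero
  have hkerne : ∃ v : Fin n → ZMod p, v ∈ V ∧ v ≠ 0 := by
    by_contra h
    push_neg at h
    have hbot : LinearMap.ker M.mulVecLin = ⊥ := by
      rw [← hV, Submodule.eq_bot_iff]
      exact fun x hx => h x hx
    have hinj : Function.Injective M.mulVecLin := LinearMap.ker_eq_bot.mp hbot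
    have hle := LinearMap.finrank_le_finrank_of_injective hinj
    rw [Module.finrank_fin_fun, Module.finrank_fin_fun] at hle
    omega
  have hSh : {k : ℕ | ∃ v ∈ V, v ≠ 0 ∧ k = ∑ i, (v i).val}.Nonempty := by
    obtain ⟨v, hvV, hv0⟩ := hkerne
    exact ⟨∑ i, (v i).val, v, hvV, hv0, rfl⟩
  obtain ⟨v, hvV, hv0, hveq⟩ := Nat.sInf_mem hSh
  obtain ⟨hvpos, hvmem⟩ := key1 v hvV hv0
  have hch_mem : nheight V ∈ {k : ℕ | 0 < k ∧ (0 : Fin m → ZMod p) ∈ iterSum A k} := by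
    have h' : nheight V = ∑ i, (v i).val := hveq
    rw [Set.mem_setOf_eq, h']
    exact ⟨hvpos, hvmem⟩
  have hc_le : coheight A ≤ nheight V := Nat.sInf_le hch_mem
  refine ⟨hc_le, fun hlt => ?_⟩
  -- Part B
  obtain ⟨hkpos, hk⟩ := Nat.sInf_mem (⟨nheight V, hch_mem⟩ :
    {k : ℕ | 0 < k ∧ (0 : Fin m → ZMod p) ∈ iterSum A k}.Nonempty)
  obtain ⟨s, hcard, hsA, hsum⟩ := exists_multiset_of_mem_iterSum A hk
  have hchoice : ∀ a ∈ s, ∃ j : Fin n, a = col j := by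
    intro a ha
    have h' := hsA a ha
    rw [hA] at h'
    obtain ⟨j, hj⟩ := h'
    exact ⟨j, hj⟩
  have hn0 : (0 : ℕ) < n := lt_trans (lt_of_lt_of_le Nat.zero_lt_one h1) h2
  obtain ⟨g, hg⟩ : ∃ g : (Fin m → ZMod p) → Fin n, ∀ a ∈ s, col (g a) = a := by
    refine ⟨fun a => if h : ∃ j : Fin n, a = col j then h.choose else ⟨0, hn0⟩, ?_⟩
    intro a ha
    have h := hchoice a ha
    simp only [dif_pos h]
    exact h.choose_spec.symm
  set T : Multiset (Fin n) := s.map g with hT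
  have hTmap : T.map col = s := by
    have h' : Multiset.map (col ∘ g) s = Multiset.map id s :=
      Multiset.map_congr rfl (fun a ha => hg a ha)
    rw [hT, Multiset.map_map, h', Multiset.map_id]
  have hTcard : Multiset.card T = coheight A := by rw [hT, Multiset.card_map, hcard]; rfl
  set c : Fin n → ℕ := fun j => T.count j with hc
  set v' : Fin n → ZMod p := fun j => (c j : ZMod p) with hv'
  have hcsum : ∑ j, c j = coheight A := by
    rw [← hTcard, ← Multiset.toFinset_sum_count_eq T]
    exact (Finset.sum_subset (Finset.subset_univ _)
      (fun j _ hj => by simp [hc, Multiset.count_eq_zero_of_notMem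
        (by simpa using hj)])).symm
  have hcle : ∀ j, c j ≤ coheight A := fun j => hTcard ▸ Multiset.count_le_card j T
  have hvec : (∑ j, c j • col j) = 0 := by
    have h1' : (T.map col).sum = ∑ j ∈ T.toFinset, T.count j • col j :=
      Finset.sum_multiset_map_count T col
    have h2' : ∑ j ∈ T.toFinset, T.count j • col j = ∑ j, c j • col j :=
      Finset.sum_subset (Finset.subset_univ _)
        (fun j _ hj => by
          simp [hc, Multiset.count_eq_zero_of_notMem (by simpa using hj)])
    rw [← h2', ← h1', hTmap, hsum]
  have hv'V : v' ∈ V := by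
    rw [hV, LinearMap.mem_ker]
    have hmv : M.mulVec v' = 0 := by
      funext i
      have h3 := congrFun hvec i
      simp only [Finset.sum_apply, Pi.smul_apply, Pi.zero_apply, nsmul_eq_mul, hcoldef] at h3
      show ∑ j, M i j * v' j = 0
      rw [Finset.sum_congr rfl (fun j _ => mul_comm (M i j) (v' j))]
      exact h3
    rw [Matrix.mulVecLin_apply]
    exact hmv
  have hv'0 : v' ≠ 0 := by
    have hTne : T ≠ 0 := by
      intro h
      rw [h, Multiset.card_zero] at hTcard
      have hkpos' : 0 < coheight A := hkpos
      rw [← hTcard] at hkpos'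
      exact lt_irrefl 0 hkpos'
    obtain ⟨j, hj⟩ := Multiset.exists_mem_of_ne_zero hTne
    have hcj : 0 < c j := Multiset.count_pos.mpr hj
    intro h
    have h0 := congrFun h j
    simp only [hv', Pi.zero_apply] at h0
    have hmod : (c j) % p = 0 := by
      have hval := ZMod.val_natCast (n := p) (c j)
      rw [h0] at hval
      simpa using hval.symm
    rw [Nat.mod_eq_of_lt (lt_of_le_of_lt (hcle j) hlt)] at hmod
    exact hcj.ne' hmod
  have hvals : ∑ j, (v' j).val = coheight A := by
    have hvj : ∀ j, (v' j).val = c j := by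
      intro j
      rw [hv']
      simp only
      rw [ZMod.val_natCast]
      exact Nat.mod_eq_of_lt (lt_of_le_of_lt (hcle j) hlt)
    rw [Finset.sum_congr rfl (fun j _ => hvj j), hcsum]
  have hh_le : nheight V ≤ coheight A := Nat.sInf_le ⟨v', hv'V, hv'0, hvals.symm⟩
  exact le_antisymm hc_le hh_le
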